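/- Let a_1 x_1 + ⋯ + a_n x_n = 0 be a shift-invariant equation with non-zero integer coefficients, and let k ≥ 2. The following are equivalent: (1) for every k-IP-set A and every finite coloring of A, there exist pairwise distinct x_1, ..., x_n ∈ A, all of the same color, with a_1 x_1 + ⋯ + a_n x_n = 0; (2) there exists t ∈ ℕ such that for all positive integers y_1, ..., y_t, if FS^k((y_j)_{j=1}^t) has distinct sums, then it contains pairwise distinct x_1, ..., x_n with a_1 x_1 + ⋯ + a_n x_n = 0. -/

import Mathlib

/-- `FSk k x` is the set of all finite sums `∑ εᵢ xᵢ` with each `εᵢ ∈ {0,…,k-1}`,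
excluding `0`. -/
def FSk (k : ℕ) (x : ℕ → ℕ) : Set ℕ :=
  {s | ∃ n : ℕ, ∃ ε : Fin n → ℕ, (∀ i, ε i < k) ∧ s = ∑ i, ε i * x i} \ {0}

/-- A `k`-IP-set. -/
def IsKIPSet (k : ℕ) (A : Set ℕ) : Prop :=
  ∃ x : ℕ → ℕ, StrictMono x ∧ (∀ i, 0 < x i) ∧ FSk k x ⊆ A

/-- `FSkFin k t y` is the finite version: all sums `∑_{j<t} εⱼ yⱼ` with
`εⱼ ∈ {0,…,k-1}`, excluding `0`. -/
def FSkFin (k t : ℕ) (y : Fin t → ℕ) : Set ℕ :=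
  {s | ∃ ε : Fin t → ℕ, (∀ j, ε j < k) ∧ s = ∑ j, ε j * y j} \ {0}

/-- `FSkFin k t y` has distinct sums if the map `(ε₁,…,ε_t) ↦ ∑ εⱼ yⱼ` is injective on
`{0,…,k-1}^t`. -/
def HasDistinctSums (k t : ℕ) (y : Fin t → ℕ) : Prop :=
  ∀ ε δ : Fin t → ℕ, (∀ j, ε j < k) → (∀ j, δ j < k) →
    (∑ j, ε j * y j) = (∑ j, δ j * y j) → ε = δ


section helpers
open Finset

lemma core_int (D : ℕ) (g : ℕ → ℕ) (hg : ∀ l, D * ∑ p ∈ Finset.range l, g p < g l) :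
    ∀ (L : ℕ) (c : ℕ → ℤ), (∀ q, (c q).natAbs < D) →
      (∑ q ∈ Finset.range L, c q * (g q : ℤ)) = 0 → ∀ q < L, c q = 0 := by
  intro L
  induction L with
  | zero => intro c hc h q hq; omega
  | succ L ih =>
    intro c hc h q hq
    have htop : c L = 0 := by
      have hsum : ∑ q ∈ Finset.range L, c q * (g q : ℤ) = - (c L * (g L : ℤ)) := by
        rw [Finset.sum_range_succ] at h; linarith
      have habs : |c L * (g L : ℤ)| ≤ ∑ q ∈ Finset.range L, |c q * (g q : ℤ)| := by
        rw [← abs_neg, ← hsum]; exact Finset.abs_sum_le_sum_abs _ _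
      have h2 : ∑ q ∈ Finset.range L, |c q * (g q : ℤ)| ≤
          ∑ q ∈ Finset.range L, ((D : ℤ) - 1) * (g q : ℤ) := by
        apply Finset.sum_le_sum
        intro q _
        rw [abs_mul, abs_of_nonneg (by positivity : (0:ℤ) ≤ (g q : ℤ))]
        have := hc q
        have : |c q| ≤ (D : ℤ) - 1 := by
          rw [Int.abs_eq_natAbs]; omega
        nlinarith [Int.natCast_nonneg (g q)]
      have h3 : ((D : ℤ) - 1) * ∑ q ∈ Finset.range L, (g q : ℤ) < (g L : ℤ) := by
        have h4 := hg L
        have h5 : ((D : ℤ)) * ∑ q ∈ Finset.range L, (g q : ℤ) < (g L : ℤ) := by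
          exact_mod_cast (by push_cast; exact_mod_cast h4 : ((D * ∑ p ∈ Finset.range L, g p : ℕ) : ℤ) < (g L : ℤ))
        have h6 : (0:ℤ) ≤ ∑ q ∈ Finset.range L, (g q : ℤ) :=
          Finset.sum_nonneg fun q _ => by positivity
        nlinarith
      rw [← Finset.mul_sum] at h2
      have habs2 : |c L| * (g L : ℤ) < (g L : ℤ) := by
        rw [abs_mul, abs_of_nonneg (by positivity : (0:ℤ) ≤ (g L : ℤ))] at habs
        linarith
      have hgL : (0:ℤ) < (g L : ℤ) := by
        have := hg L
        have : 0 < g L := by omega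
        exact_mod_cast this
      have : |c L| < 1 := by nlinarith [abs_nonneg (c L)]
      rw [abs_lt] at this
      omega
    rcases Nat.lt_succ_iff_lt_or_eq.mp hq with h' | rfl
    · apply ih c hc _ q h'
      rw [Finset.sum_range_succ, htop] at h
      linarith
    · exact htop

lemma core_nat (k : ℕ) (g : ℕ → ℕ) (hg : ∀ l, k * ∑ p ∈ Finset.range l, g p < g l)
    (L : ℕ) (ε δ : ℕ → ℕ) (hε : ∀ q, ε q < k) (hδ : ∀ q, δ q < k)
    (h : ∑ q ∈ Finset.range L, ε q * g q = ∑ q ∈ Finset.range L, δ q * g q) :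
    ∀ q < L, ε q = δ q := by
  have := core_int k g hg L (fun q => (ε q : ℤ) - (δ q : ℤ))
    (fun q => by show ((ε q : ℤ) - (δ q : ℤ)).natAbs < k; have := hε q; have := hδ q; omega)
    (by
      have : (∑ q ∈ Finset.range L, ((ε q : ℤ) - (δ q : ℤ)) * (g q : ℤ))
          = (∑ q ∈ Finset.range L, (ε q : ℤ) * g q) - ∑ q ∈ Finset.range L, (δ q : ℤ) * g q := by
        rw [← Finset.sum_sub_distrib]; congr 1; ext q; ring
      rw [this]
      have h' : ((∑ q ∈ Finset.range L, ε q * g q : ℕ) : ℤ)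
          = ((∑ q ∈ Finset.range L, δ q * g q : ℕ) : ℤ) := by exact_mod_cast h
      push_cast at h'
      linarith)
  intro q hq
  have h2 : (ε q : ℤ) - (δ q : ℤ) = 0 := this q hq
  omega


lemma hg_pow (B D : ℕ) (hB : 0 < B) (hD : D + 1 ≤ B) :
    ∀ l, D * ∑ p ∈ Finset.range l, B ^ (p + 1) < B ^ (l + 1) := by
  intro l
  induction l with
  | zero => simpa using hB
  | succ l ih =>
    rw [Finset.sum_range_succ, Nat.mul_add]
    have h2 : (D + 1) * B ^ (l + 1) ≤ B ^ (l + 1) * B := by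
      rw [mul_comm (B ^ (l + 1)) B]; exact Nat.mul_le_mul_right _ hD
    have h3 : (D + 1) * B ^ (l + 1) = D * B ^ (l + 1) + B ^ (l + 1) := by ring
    linarith [ih, pow_succ B (l + 1)]


/-- Reindexing a sum over an abstract finite type along an injection into ℕ. -/
lemma fiber_reindex {ι' : Type*} [Fintype ι'] (Q : ι' → ℕ) (hQ : Function.Injective Q) :
    ∃ T : ℕ, (∀ j', Q j' < T) ∧ ∀ coef : ι' → ℕ, ∃ ε : ℕ → ℕ,
      (∀ j', ε (Q j') = coef j') ∧ (∀ q, (∀ j', Q j' ≠ q) → ε q = 0) ∧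
      (∀ f : ℕ → ℕ, ∑ q ∈ Finset.range T, ε q * f q = ∑ j', coef j' * f (Q j')) := by
  classical
  refine ⟨(Finset.univ.sup Q) + 1, fun j' => Nat.lt_succ_of_le (Finset.le_sup (Finset.mem_univ j')), fun coef => ?_⟩
  refine ⟨fun q => if h : ∃ j', Q j' = q then coef h.choose else 0, ?_, ?_, ?_⟩
  · intro j'
    have h : ∃ j'', Q j'' = Q j' := ⟨j', rfl⟩
    simp only [dif_pos h]
    have := h.choose_spec
    rw [hQ this]
  · intro q hq
    show (if h : ∃ j', Q j' = q then coef h.choose else 0) = 0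
    rw [dif_neg]
    rintro ⟨j', hj'⟩
    exact hq j' hj'
  · intro f
    have himg : (Finset.univ.image Q) ⊆ Finset.range ((Finset.univ.sup Q) + 1) := by
      intro q hq
      simp only [Finset.mem_image] at hq
      obtain ⟨j', _, rfl⟩ := hq
      exact Finset.mem_range.mpr (Nat.lt_succ_of_le (Finset.le_sup (Finset.mem_univ j')))
    rw [← Finset.sum_subset himg]
    · rw [Finset.sum_image (fun x _ y _ h => hQ h)]
      apply Finset.sum_congr rfl
      intro j' _
      congr 1
      have h : ∃ j'', Q j'' = Q j' := ⟨j', rfl⟩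
      simp only [dif_pos h]
      rw [hQ h.choose_spec]
    · intro q _ hq
      show (if h : ∃ j', Q j' = q then coef h.choose else 0) * f q = 0
      rw [dif_neg, zero_mul]
      rintro ⟨j', hj'⟩
      exact hq (Finset.mem_image.mpr ⟨j', Finset.mem_univ j', hj'⟩)

/-- auxiliary: builds (index, partial sum) pairs for a k-super-increasing subsequence -/
def nuAux (x : ℕ → ℕ) (k : ℕ) : ℕ → ℕ × ℕ
  | 0 => (0, x 0)
  | l + 1 =>
    let p := nuAux x k l
    (p.2 * k + p.1 + 1, p.2 + x (p.2 * k + p.1 + 1))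

def nu (x : ℕ → ℕ) (k : ℕ) (l : ℕ) : ℕ := (nuAux x k l).1

lemma nu_strictMono (x : ℕ → ℕ) (k : ℕ) : StrictMono (nu x k) := by
  apply strictMono_nat_of_lt_succ
  intro l
  show (nuAux x k l).1 < (nuAux x k (l + 1)).1
  simp only [nuAux]
  omega

lemma nuAux_snd (x : ℕ → ℕ) (k : ℕ) (l : ℕ) :
    (nuAux x k l).2 = ∑ p ∈ Finset.range (l + 1), x (nu x k p) := by
  induction l with
  | zero => simp [nuAux, nu]
  | succ l ih =>
    rw [Finset.sum_range_succ, ← ih]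
    show (nuAux x k l).2 + x ((nuAux x k l).2 * k + (nuAux x k l).1 + 1)
        = (nuAux x k l).2 + x (nu x k (l + 1))
    rfl

lemma nu_superincreasing (x : ℕ → ℕ) (k : ℕ) (hx : StrictMono x) (hpos : ∀ i, 0 < x i) :
    ∀ l, k * ∑ p ∈ Finset.range l, x (nu x k p) < x (nu x k l) := by
  intro l
  cases l with
  | zero => simpa using hpos (nu x k 0)
  | succ l =>
    have h1 : k * ∑ p ∈ Finset.range (l + 1), x (nu x k p) = (nuAux x k l).2 * k := by
      rw [nuAux_snd, mul_comm]
    rw [h1]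
    have h2 : nu x k (l + 1) = (nuAux x k l).2 * k + (nuAux x k l).1 + 1 := rfl
    have h3 : nu x k (l + 1) ≤ x (nu x k (l + 1)) := hx.le_apply
    omega

def MatrixCond (n : ℕ) (a : Fin n → ℤ) (k : ℕ) : Prop :=
  ∃ m : ℕ, 0 < m ∧ ∃ M : Fin n → Fin m → ℕ,
    (∀ i j, M i j < k) ∧ Function.Injective M ∧ (∀ i, ∃ j, M i j ≠ 0) ∧
    (∀ j, ∑ i, a i * (M i j : ℤ) = 0)

lemma extract_matrixCond {n k : ℕ} (hn : 0 < n) (hk : 2 ≤ k) (a : Fin n → ℤ)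
    (B : ℕ) (hB : (k - 1) * (∑ i, (a i).natAbs) + k ≤ B)
    (xv : Fin n → ℕ) (hinj : Function.Injective xv)
    (hrep : ∀ i, ∃ N : ℕ, ∃ ε : Fin N → ℕ, (∀ j, ε j < k) ∧ xv i = ∑ j, ε j * B ^ ((j : ℕ) + 1))
    (hne : ∀ i, xv i ≠ 0)
    (heq : ∑ i, a i * (xv i : ℤ) = 0) : MatrixCond n a k := by
  classical
  choose N ε hb hx using hrep
  set C := ∑ i, (a i).natAbs with hC
  have hBpos : 0 < B := by omega
  set m := Finset.univ.sup N with hm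
  set E : Fin n → ℕ → ℕ := fun i q => if h : q < N i then ε i ⟨q, h⟩ else 0 with hE
  have hElt : ∀ i q, E i q < k := by
    intro i q
    simp only [hE]
    split
    · exact hb i _
    · omega
  have hNm : ∀ i, N i ≤ m := fun i => Finset.le_sup (Finset.mem_univ i)
  have hsumeq : ∀ i, xv i = ∑ q ∈ Finset.range m, E i q * B ^ (q + 1) := by
    intro i
    rw [hx i]
    have h1 : ∑ j : Fin (N i), ε i j * B ^ ((j : ℕ) + 1)
        = ∑ q ∈ Finset.range (N i), E i q * B ^ (q + 1) := by
      rw [← Fin.sum_univ_eq_sum_range (fun q => E i q * B ^ (q + 1)) (N i)]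
      apply Finset.sum_congr rfl
      intro j _
      congr 1
      simp only [hE, Fin.is_lt, dif_pos, Fin.eta]
    rw [h1]
    apply Finset.sum_subset
    · exact Finset.range_mono (hNm i)
    · intro q _ hq
      simp only [Finset.mem_range, not_lt] at hq
      simp only [hE, dif_neg (not_lt.mpr hq), zero_mul]
  have hmpos : 0 < m := by
    rcases Nat.eq_zero_or_pos m with h | h
    · exfalso
      apply hne ⟨0, hn⟩
      rw [hsumeq ⟨0, hn⟩, h]
      simp
    · exact h
  refine ⟨m, hmpos, fun i j => E i (j : ℕ), fun i j => hElt i j, ?_, ?_, ?_⟩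
  · intro i i' h
    apply hinj
    rw [hsumeq i, hsumeq i']
    apply Finset.sum_congr rfl
    intro q hq
    have : E i q = E i' q := congrFun h (⟨q, Finset.mem_range.mp hq⟩ : Fin m)
    rw [this]
  · intro i
    by_contra h
    push_neg at h
    apply hne i
    rw [hsumeq i]
    apply Finset.sum_eq_zero
    intro q hq
    rw [show E i q = 0 from h ⟨q, Finset.mem_range.mp hq⟩, zero_mul]
  · have hcol : ∀ q < m, (∑ i, a i * (E i q : ℤ)) = 0 := by
      apply core_int ((k - 1) * C + 1) (fun q => B ^ (q + 1)) (hg_pow B _ hBpos (by omega)) m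
      · intro q
        have h1 : |∑ i, a i * (E i q : ℤ)| ≤ ∑ i, |a i * (E i q : ℤ)| :=
          Finset.abs_sum_le_sum_abs _ _
        have h2 : ∑ i, |a i * (E i q : ℤ)| ≤ ∑ i, ((a i).natAbs : ℤ) * ((k - 1 : ℕ) : ℤ) := by
          apply Finset.sum_le_sum
          intro i _
          rw [abs_mul, Int.abs_eq_natAbs]
          apply mul_le_mul_of_nonneg_left _ (by positivity)
          rw [Int.abs_eq_natAbs]
          have := hElt i q
          have h3 : (E i q) ≤ k - 1 := by omega
          simp only [Int.natAbs_natCast]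
          exact_mod_cast h3
        have h4 : ∑ i, ((a i).natAbs : ℤ) * ((k - 1 : ℕ) : ℤ) = (((k - 1) * C : ℕ) : ℤ) := by
          push_cast [hC, Finset.sum_mul, Finset.mul_sum]
          apply Finset.sum_congr rfl
          intro i _
          ring
        rw [h4] at h2
        have h5 : |∑ i, a i * (E i q : ℤ)| ≤ (((k - 1) * C : ℕ) : ℤ) := le_trans h1 h2
        rw [Int.abs_eq_natAbs] at h5
        have h6 := Int.ofNat_le.mp h5
        omega
      · have key : ∑ q ∈ Finset.range m, (∑ i, a i * (E i q : ℤ)) * ((B : ℤ) ^ (q + 1)) = 0 := by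
          have h1 : ∑ q ∈ Finset.range m, (∑ i, a i * (E i q : ℤ)) * ((B : ℤ) ^ (q + 1))
              = ∑ q ∈ Finset.range m, ∑ i, a i * (E i q : ℤ) * ((B : ℤ) ^ (q + 1)) := by
            apply Finset.sum_congr rfl
            intro q _
            rw [Finset.sum_mul]
          rw [h1, Finset.sum_comm, ← heq]
          apply Finset.sum_congr rfl
          intro i _
          rw [hsumeq i]
          push_cast
          rw [Finset.mul_sum]
          apply Finset.sum_congr rfl
          intro q _
          ring
        push_cast
        exact key
    intro j
    have := hcol (j : ℕ) j.isLt
    simpa using this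


variable {n k : ℕ}

lemma matrix_to_rhs (a : Fin n → ℤ) (mc : MatrixCond n a k) :
    ∃ t : ℕ, 0 < t ∧ ∀ y : Fin t → ℕ, (∀ j, 0 < y j) →
      HasDistinctSums k t y →
        ∃ x : Fin n → ℕ, Function.Injective x ∧ (∀ i, x i ∈ FSkFin k t y) ∧
          ∑ i, a i * (x i : ℤ) = 0 := by
  obtain ⟨m, hm, M, hMlt, hMinj, hMne, hcol⟩ := mc
  refine ⟨m, hm, fun y hy hds => ⟨fun i => ∑ j, M i j * y j, ?_, ?_, ?_⟩⟩
  · intro i i' h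
    exact hMinj (hds (M i) (M i') (hMlt i) (hMlt i') h)
  · intro i
    constructor
    · exact ⟨M i, hMlt i, rfl⟩
    · simp only [Set.mem_singleton_iff]
      obtain ⟨j₀, hj₀⟩ := hMne i
      have h1 : M i j₀ * y j₀ ≤ ∑ j, M i j * y j :=
        Finset.single_le_sum (f := fun j => M i j * y j) (fun j _ => Nat.zero_le _)
          (Finset.mem_univ j₀)
      have h2 : 0 < M i j₀ * y j₀ := Nat.mul_pos (Nat.pos_of_ne_zero hj₀) (hy j₀)
      omega
  · have : ∀ i : Fin n, ((∑ j, M i j * y j : ℕ) : ℤ) = ∑ j, (M i j : ℤ) * (y j : ℤ) := by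
      intro i; push_cast; rfl
    calc ∑ i, a i * ((∑ j, M i j * y j : ℕ) : ℤ)
        = ∑ i, ∑ j, a i * ((M i j : ℤ) * (y j : ℤ)) := by
          apply Finset.sum_congr rfl
          intro i _
          rw [this i, Finset.mul_sum]
      _ = ∑ j, (∑ i, a i * (M i j : ℤ)) * (y j : ℤ) := by
          rw [Finset.sum_comm]
          apply Finset.sum_congr rfl
          intro j _
          rw [Finset.sum_mul]
          apply Finset.sum_congr rfl
          intro i _
          ring
      _ = 0 := by
          apply Finset.sum_eq_zero
          intro j _
          rw [hcol j, zero_mul]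

lemma rhs_to_matrix (hn : 0 < n) (hk : 2 ≤ k) (a : Fin n → ℤ) (ha : ∀ i, a i ≠ 0)
    (H : ∃ t : ℕ, 0 < t ∧ ∀ y : Fin t → ℕ, (∀ j, 0 < y j) →
      HasDistinctSums k t y →
        ∃ x : Fin n → ℕ, Function.Injective x ∧ (∀ i, x i ∈ FSkFin k t y) ∧
          ∑ i, a i * (x i : ℤ) = 0) : MatrixCond n a k := by
  classical
  obtain ⟨t, ht, H⟩ := H
  set C := ∑ i, (a i).natAbs with hC
  set B := k * C + k with hB
  have hkB' : k ≤ B := by rw [hB]; exact Nat.le_add_left k (k * C)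
  have hBpos : 0 < B := by omega
  have hC1 : 1 ≤ C := by
    rw [hC]
    calc 1 ≤ (a ⟨0, hn⟩).natAbs := by
          have := ha ⟨0, hn⟩; omega
      _ ≤ ∑ i, (a i).natAbs :=
          Finset.single_le_sum (f := fun i => (a i).natAbs) (fun i _ => Nat.zero_le _)
            (Finset.mem_univ _)
  have hkC : k * 1 ≤ k * C := Nat.mul_le_mul_left k hC1
  have hkB : k + 1 ≤ B := by rw [hB]; omega
  have hds : HasDistinctSums k t (fun j => B ^ ((j : ℕ) + 1)) := by
    intro ε δ hε hδ hsum
    set Ee : ℕ → ℕ := fun q => if h : q < t then ε ⟨q, h⟩ else 0 with hEe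
    set De : ℕ → ℕ := fun q => if h : q < t then δ ⟨q, h⟩ else 0 with hDe
    have h1 : ∑ j : Fin t, ε j * B ^ ((j : ℕ) + 1) = ∑ q ∈ Finset.range t, Ee q * B ^ (q + 1) := by
      rw [← Fin.sum_univ_eq_sum_range (fun q => Ee q * B ^ (q + 1)) t]
      apply Finset.sum_congr rfl
      intro j _
      congr 1
      simp only [hEe, Fin.is_lt, dif_pos, Fin.eta]
    have h2 : ∑ j : Fin t, δ j * B ^ ((j : ℕ) + 1) = ∑ q ∈ Finset.range t, De q * B ^ (q + 1) := by
      rw [← Fin.sum_univ_eq_sum_range (fun q => De q * B ^ (q + 1)) t]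
      apply Finset.sum_congr rfl
      intro j _
      congr 1
      simp only [hDe, Fin.is_lt, dif_pos, Fin.eta]
    have key := core_nat k (fun q => B ^ (q + 1)) (hg_pow B k hBpos hkB) t Ee De
      (by intro q
          by_cases h : q < t
          · simp only [hEe]; rw [dif_pos h]; exact hε _
          · simp only [hEe]; rw [dif_neg h]; omega)
      (by intro q
          by_cases h : q < t
          · simp only [hDe]; rw [dif_pos h]; exact hδ _
          · simp only [hDe]; rw [dif_neg h]; omega)
      (by rw [← h1, ← h2]; exact hsum)
    funext j
    have h5 := key (j : ℕ) j.isLt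
    have h6 : Ee (j : ℕ) = ε j := by
      simp only [hEe]
      rw [dif_pos j.isLt]
    have h7 : De (j : ℕ) = δ j := by
      simp only [hDe]
      rw [dif_pos j.isLt]
    rw [h6, h7] at h5
    exact h5
  obtain ⟨xv, hinj, hmem, heq⟩ := H (fun j => B ^ ((j : ℕ) + 1))
    (fun j => pow_pos hBpos _) hds
  apply extract_matrixCond hn hk a B
    (by rw [← hC]
        have h9 : (k - 1) * C ≤ k * C := Nat.mul_le_mul_right C (by omega)
        omega) xv hinj _ _ heq
  · intro i
    obtain ⟨⟨ε, hε, hsum⟩, -⟩ := hmem i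
    exact ⟨t, ε, hε, hsum⟩
  · intro i
    have := (hmem i).2
    simpa using this

lemma lhs_to_matrix (hn : 0 < n) (hk : 2 ≤ k) (a : Fin n → ℤ) (ha : ∀ i, a i ≠ 0)
    (H : ∀ A : Set ℕ, IsKIPSet k A → ∀ (r : ℕ) (c : ℕ → Fin r),
      ∃ x : Fin n → ℕ, Function.Injective x ∧ (∀ i, x i ∈ A) ∧
        (∀ i i', c (x i) = c (x i')) ∧ ∑ i, a i * (x i : ℤ) = 0) : MatrixCond n a k := by
  classical
  set C := ∑ i, (a i).natAbs with hC
  set B := k * C + k with hB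
  have hkB' : k ≤ B := by rw [hB]; exact Nat.le_add_left k (k * C)
  have hBpos : 0 < B := by omega
  have hB1 : 1 < B := by omega
  have hmono : StrictMono (fun j : ℕ => B ^ (j + 1)) := fun j j' h =>
    Nat.pow_lt_pow_right hB1 (by omega)
  obtain ⟨xv, hinj, hmem, -, heq⟩ := H (FSk k (fun j => B ^ (j + 1)))
    ⟨fun j => B ^ (j + 1), hmono, fun j => pow_pos hBpos _, subset_rfl⟩
    1 (fun _ => 0)
  apply extract_matrixCond hn hk a B
    (by rw [← hC]
        have h9 : (k - 1) * C ≤ k * C := Nat.mul_le_mul_right C (by omega)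
        omega) xv hinj _ _ heq
  · intro i
    obtain ⟨⟨N, ε, hε, hsum⟩, -⟩ := hmem i
    exact ⟨N, ε, hε, hsum⟩
  · intro i
    have := (hmem i).2
    simpa using this



lemma matrix_to_lhs {n k : ℕ} (hk : 2 ≤ k) (a : Fin n → ℤ) (hsi : ∑ i, a i = 0)
    (mc : MatrixCond n a k) :
    ∀ A : Set ℕ, IsKIPSet k A → ∀ (r : ℕ) (c : ℕ → Fin r),
      ∃ x : Fin n → ℕ, Function.Injective x ∧ (∀ i, x i ∈ A) ∧
        (∀ i i', c (x i) = c (x i')) ∧ ∑ i, a i * (x i : ℤ) = 0 := by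
  classical
  obtain ⟨m, hm, M, hMlt, hMinj, -, hcol⟩ := mc
  rintro A ⟨x, hxmono, hxpos, hsub⟩ r c
  -- Hales–Jewett with alphabet `Fin m → Fin k`
  obtain ⟨ι, ιfin, hHJ⟩ :=
    Combinatorics.Line.exists_mono_in_high_dimension (Fin m → Fin k) (Fin r)
  haveI := ιfin
  set eN : ι ≃ Fin (Fintype.card ι) := Fintype.equivFin ι with heN
  -- position map
  set P : Option (ι × Fin m) → ℕ := fun o =>
    Option.rec 0 (fun ju => 1 + ((eN ju.1 : ℕ) * m + (ju.2 : ℕ))) o with hP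
  have hPinj : Function.Injective P := by
    rintro (_ | ⟨j, u⟩) (_ | ⟨j', u'⟩) h
    · rfl
    · simp only [hP] at h; omega
    · simp only [hP] at h; omega
    · simp only [hP] at h
      have h1 : (eN j : ℕ) * m + (u : ℕ) = (eN j' : ℕ) * m + (u' : ℕ) := by omega
      have hu : (u : ℕ) = (u' : ℕ) := by
        have e1 : ((eN j : ℕ) * m + (u : ℕ)) % m = (u : ℕ) := by
          rw [add_comm, Nat.add_mul_mod_self_right, Nat.mod_eq_of_lt u.isLt]
        have e2 : ((eN j' : ℕ) * m + (u' : ℕ)) % m = (u' : ℕ) := by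
          rw [add_comm, Nat.add_mul_mod_self_right, Nat.mod_eq_of_lt u'.isLt]
        rw [← e1, ← e2, h1]
      have hj : (eN j : ℕ) = (eN j' : ℕ) := by
        have h3 : (eN j : ℕ) * m = (eN j' : ℕ) * m := by omega
        exact Nat.eq_of_mul_eq_mul_right hm h3
      have : j = j' := eN.injective (Fin.ext hj)
      subst this
      rw [Fin.ext hu]
  -- ground sequence: x composed with the super-increasing index selection
  set g : ℕ → ℕ := fun l => x (nu x k l) with hg
  have hgsi : ∀ l, k * ∑ p ∈ Finset.range l, g p < g l :=
    nu_superincreasing x k hxmono hxpos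
  set Q : Option (ι × Fin m) → ℕ := fun o => nu x k (P o) with hQ
  have hQinj : Function.Injective Q := fun o o' h =>
    hPinj ((nu_strictMono x k).injective h)
  -- letters corresponding to the rows of the matrix
  set lam : Fin n → (Fin m → Fin k) := fun i u => ⟨M i u, hMlt i u⟩ with hlam
  -- the coloring of the combinatorial cube
  set Col : (ι → (Fin m → Fin k)) → Fin r := fun w =>
    c (x (nu x k 0) + ∑ ju : ι × Fin m, ((w ju.1 ju.2 : ℕ)) * x (Q (some ju))) with hCol
  obtain ⟨l, c₀, hl⟩ := hHJ Col
  -- coefficient functions of the candidate solutions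
  set Cf : Fin n → Option (ι × Fin m) → ℕ := fun i o =>
    Option.rec 1 (fun ju => (((l.idxFun ju.1).getD (lam i)) ju.2 : ℕ)) o with hCf
  have hCflt : ∀ i o, Cf i o < k := by
    rintro i (_ | ⟨j, u⟩)
    · have h0 : Cf i none = 1 := rfl
      omega
    · exact (((l.idxFun j).getD (lam i)) u).isLt
  set xv : Fin n → ℕ := fun i => ∑ o : Option (ι × Fin m), Cf i o * x (Q o) with hxv
  have hval : ∀ i, xv i = x (nu x k 0) + ∑ ju : ι × Fin m, ((l (lam i)) ju.1 ju.2 : ℕ) * x (Q (some ju)) := by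
    intro i
    show ∑ o : Option (ι × Fin m), Cf i o * x (Q o)
        = x (nu x k 0) + ∑ ju : ι × Fin m, ((l (lam i)) ju.1 ju.2 : ℕ) * x (Q (some ju))
    rw [univ_option, Finset.sum_insertNone]
    congr 1
    · show 1 * x (Q none) = x (nu x k 0)
      rw [one_mul]
  have hcolor : ∀ i, c (xv i) = c₀ := by
    intro i
    rw [hval i]
    exact hl (lam i)
  refine ⟨xv, ?_, ?_, ?_, ?_⟩
  · -- injectivity
    intro i i' h
    obtain ⟨T₀, hT₀, hfib₀⟩ := fiber_reindex P hPinj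
    obtain ⟨ε, hε1, hε2, hε3⟩ := hfib₀ (Cf i)
    obtain ⟨δ, hδ1, hδ2, hδ3⟩ := hfib₀ (Cf i')
    have hεlt : ∀ q, ε q < k := by
      intro q
      by_cases hq : ∃ o, P o = q
      · obtain ⟨o, rfl⟩ := hq
        rw [hε1 o]; exact hCflt i o
      · push_neg at hq
        rw [hε2 q hq]; omega
    have hδlt : ∀ q, δ q < k := by
      intro q
      by_cases hq : ∃ o, P o = q
      · obtain ⟨o, rfl⟩ := hq
        rw [hδ1 o]; exact hCflt i' o
      · push_neg at hq
        rw [hδ2 q hq]; omega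
    have hsums : ∑ q ∈ Finset.range T₀, ε q * g q = ∑ q ∈ Finset.range T₀, δ q * g q := by
      rw [hε3 g, hδ3 g]
      have e1 : ∑ o : Option (ι × Fin m), Cf i o * g (P o) = xv i := by
        rw [hxv]
      have e2 : ∑ o : Option (ι × Fin m), Cf i' o * g (P o) = xv i' := by
        rw [hxv]
      rw [e1, e2, h]
    have hkey := core_nat k g hgsi T₀ ε δ hεlt hδlt hsums
    have hCfeq : ∀ o, Cf i o = Cf i' o := by
      intro o
      rw [← hε1 o, ← hδ1 o]
      exact hkey (P o) (hT₀ o)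
    obtain ⟨j₀, hj₀⟩ := l.proper
    apply hMinj
    funext u
    have h1 := hCfeq (some (j₀, u))
    simp only [hCf, hj₀, Option.getD_none, hlam] at h1
    exact h1
  · -- membership
    intro i
    apply hsub
    obtain ⟨T, hT, hfib⟩ := fiber_reindex Q hQinj
    obtain ⟨ε, hε1, hε2, hε3⟩ := hfib (Cf i)
    have hεlt : ∀ q, ε q < k := by
      intro q
      by_cases hq : ∃ o, Q o = q
      · obtain ⟨o, rfl⟩ := hq
        rw [hε1 o]; exact hCflt i o
      · push_neg at hq
        rw [hε2 q hq]; omega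
    have hpos' : 0 < xv i := by
      have h1 : Cf i none * x (Q none) ≤ xv i := by
        rw [hxv]
        exact Finset.single_le_sum (f := fun o => Cf i o * x (Q o))
          (fun o _ => Nat.zero_le _) (Finset.mem_univ none)
      have h2 : 0 < Cf i none * x (Q none) := by
        have : Cf i none = 1 := rfl
        rw [this, one_mul]
        exact hxpos _
      omega
    constructor
    · refine ⟨T, fun q => ε q, fun q => hεlt q, ?_⟩
      rw [Fin.sum_univ_eq_sum_range (fun q => ε q * x q) T, hε3 x]
    · simp only [Set.mem_singleton_iff]
      omega
  · -- monochromatic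
    intro i i'
    rw [hcolor i, hcolor i']
  · -- the equation
    have hcast : ∀ i, (xv i : ℤ) = ∑ o : Option (ι × Fin m), (Cf i o : ℤ) * (x (Q o) : ℤ) := by
      intro i
      rw [hxv]
      push_cast
      rfl
    calc ∑ i, a i * (xv i : ℤ)
        = ∑ i, ∑ o : Option (ι × Fin m), a i * ((Cf i o : ℤ) * (x (Q o) : ℤ)) := by
          apply Finset.sum_congr rfl
          intro i _
          rw [hcast i, Finset.mul_sum]
      _ = ∑ o : Option (ι × Fin m), (∑ i, a i * (Cf i o : ℤ)) * (x (Q o) : ℤ) := by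
          rw [Finset.sum_comm]
          apply Finset.sum_congr rfl
          intro o _
          rw [Finset.sum_mul]
          apply Finset.sum_congr rfl
          intro i _
          ring
      _ = 0 := by
          apply Finset.sum_eq_zero
          rintro (_ | ⟨j, u⟩) _
          · have : ∀ i : Fin n, (Cf i none : ℤ) = 1 := fun i => rfl
            rw [show (∑ i, a i * (Cf i none : ℤ)) = ∑ i, a i from
              Finset.sum_congr rfl (fun i _ => by rw [this i, mul_one]), hsi, zero_mul]
          · rcases hidx : l.idxFun j with _ | b
            · have : ∀ i : Fin n, (Cf i (some (j, u)) : ℤ) = (M i u : ℤ) := by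
                intro i
                simp only [hCf, hidx, Option.getD_none, hlam]
              rw [show (∑ i, a i * (Cf i (some (j, u)) : ℤ)) = ∑ i, a i * (M i u : ℤ) from
                Finset.sum_congr rfl (fun i _ => by rw [this i]), hcol u, zero_mul]
            · have : ∀ i : Fin n, (Cf i (some (j, u)) : ℤ) = ((b u : ℕ) : ℤ) := by
                intro i
                simp only [hCf, hidx, Option.getD_some]
              have h8 : (∑ i, a i * (Cf i (some (j, u)) : ℤ)) = 0 := by
                calc ∑ i, a i * (Cf i (some (j, u)) : ℤ)
                    = ∑ i, a i * ((b u : ℕ) : ℤ) :=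
                      Finset.sum_congr rfl (fun i _ => by rw [this i])
                  _ = (∑ i, a i) * ((b u : ℕ) : ℤ) := by rw [Finset.sum_mul]
                  _ = 0 := by rw [hsi, zero_mul]
              rw [h8, zero_mul]

end helpers

/-- For a shift-invariant equation `∑ aᵢ xᵢ = 0` with nonzero integer coefficients and
`k ≥ 2`: every finite coloring of every `k`-IP-set admits a monochromatic pairwise
distinct solution iff there is `t` such that every `FSkFin k t y` with distinct sums
contains a pairwise distinct solution. -/
theorem stmt12 (n : ℕ) (hn : 0 < n) (a : Fin n → ℤ) (ha : ∀ i, a i ≠ 0)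
    (hsi : ∑ i, a i = 0) (k : ℕ) (hk : 2 ≤ k) :
    (∀ A : Set ℕ, IsKIPSet k A → ∀ (r : ℕ) (c : ℕ → Fin r),
      ∃ x : Fin n → ℕ, Function.Injective x ∧ (∀ i, x i ∈ A) ∧
        (∀ i i', c (x i) = c (x i')) ∧ ∑ i, a i * (x i : ℤ) = 0) ↔
    (∃ t : ℕ, 0 < t ∧ ∀ y : Fin t → ℕ, (∀ j, 0 < y j) →
      HasDistinctSums k t y →
        ∃ x : Fin n → ℕ, Function.Injective x ∧ (∀ i, x i ∈ FSkFin k t y) ∧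
          ∑ i, a i * (x i : ℤ) = 0) := by
  constructor
  · intro H
    exact matrix_to_rhs a (lhs_to_matrix hn hk a ha H)
  · intro H
    exact matrix_to_lhs hk a hsi (rhs_to_matrix hn hk a ha H)
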